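/- Fix 0 < μ < 1 and let U_μ(x₁,x₂) = −μ/√((x₁+1)² + x₂²) − (1−μ)/√((x₁−1)² + x₂²), defined on ℝ² with the two points (−1,0) and (1,0) removed. Then U_μ has exactly one critical point, located at ( (2μ−1)/(1 + 2√(μ−μ²)), 0 ); its first coordinate x̄₁ satisfies −1 < x̄₁ < 1, and the critical value is U_μ(x̄₁, 0) = −1/2 − √(μ − μ²). -/

import Mathlib

/-- Potential of the planar Euler problem of two fixed centers with masses `μ` at
`(−1,0)` and `1−μ` at `(1,0)`. -/
noncomputable def eulerU (μ x₁ x₂ : ℝ) : ℝ :=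
  -μ / Real.sqrt ((x₁ + 1) ^ 2 + x₂ ^ 2) - (1 - μ) / Real.sqrt ((x₁ - 1) ^ 2 + x₂ ^ 2)

/-- For `0 < μ < 1`, the potential `U_μ` of the Euler problem of two
centers, on `ℝ²` minus the two centers `(±1,0)`, has exactly one critical point
`(x̄₁, 0)` with `x̄₁ = (2μ−1)/(1+2√(μ−μ²)) ∈ (−1,1)`, and critical value
`−1/2 − √(μ−μ²)`. -/
lemma hasDerivAt_div_sqrt (c : ℝ) {q : ℝ → ℝ} {q' x : ℝ} (hq : HasDerivAt q q' x)
    (hp : 0 < q x) :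
    HasDerivAt (fun t => c / Real.sqrt (q t)) (-(c * q' / (2 * Real.sqrt (q x) ^ 3))) x := by
  have hs : 0 < Real.sqrt (q x) := Real.sqrt_pos.2 hp
  have h := (hasDerivAt_const x c).div ((Real.hasDerivAt_sqrt hp.ne').comp x hq) hs.ne'
  refine h.congr_deriv ?_
  have h2 : Real.sqrt (q x) ^ 2 = q x := Real.sq_sqrt hp.le
  simp only [Function.comp_apply]
  field_simp
  ring

lemma euler_deriv1 (μ x₁ x₂ : ℝ) (h₁ : 0 < (x₁ + 1) ^ 2 + x₂ ^ 2) (h₂ : 0 < (x₁ - 1) ^ 2 + x₂ ^ 2) :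
    deriv (fun t => eulerU μ t x₂) x₁ =
      μ * (x₁ + 1) / Real.sqrt ((x₁ + 1) ^ 2 + x₂ ^ 2) ^ 3
        + (1 - μ) * (x₁ - 1) / Real.sqrt ((x₁ - 1) ^ 2 + x₂ ^ 2) ^ 3 := by
  have hq1 : HasDerivAt (fun t : ℝ => (t + 1) ^ 2 + x₂ ^ 2) (2 * (x₁ + 1)) x₁ := by
    have := (((hasDerivAt_id x₁).add_const 1).pow 2).add_const (x₂ ^ 2)
    simpa using this
  have hq2 : HasDerivAt (fun t : ℝ => (t - 1) ^ 2 + x₂ ^ 2) (2 * (x₁ - 1)) x₁ := by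
    have := (((hasDerivAt_id x₁).sub_const 1).pow 2).add_const (x₂ ^ 2)
    simpa using this
  have h := (hasDerivAt_div_sqrt (-μ) hq1 h₁).sub (hasDerivAt_div_sqrt (1 - μ) hq2 h₂)
  have heq : (fun t => eulerU μ t x₂)
      = fun t => -μ / Real.sqrt ((t + 1) ^ 2 + x₂ ^ 2) - (1 - μ) / Real.sqrt ((t - 1) ^ 2 + x₂ ^ 2) := rfl
  rw [heq]
  exact h.deriv.trans (by ring)

lemma euler_deriv2 (μ x₁ x₂ : ℝ) (h₁ : 0 < (x₁ + 1) ^ 2 + x₂ ^ 2) (h₂ : 0 < (x₁ - 1) ^ 2 + x₂ ^ 2) :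
    deriv (fun t => eulerU μ x₁ t) x₂ =
      μ * x₂ / Real.sqrt ((x₁ + 1) ^ 2 + x₂ ^ 2) ^ 3
        + (1 - μ) * x₂ / Real.sqrt ((x₁ - 1) ^ 2 + x₂ ^ 2) ^ 3 := by
  have hq1 : HasDerivAt (fun t : ℝ => (x₁ + 1) ^ 2 + t ^ 2) (2 * x₂) x₂ := by
    have := (((hasDerivAt_id x₂).pow 2).const_add ((x₁ + 1) ^ 2))
    simpa [mul_comm] using this
  have hq2 : HasDerivAt (fun t : ℝ => (x₁ - 1) ^ 2 + t ^ 2) (2 * x₂) x₂ := by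
    have := (((hasDerivAt_id x₂).pow 2).const_add ((x₁ - 1) ^ 2))
    simpa [mul_comm] using this
  have h := (hasDerivAt_div_sqrt (-μ) hq1 h₁).sub (hasDerivAt_div_sqrt (1 - μ) hq2 h₂)
  have heq : (fun t => eulerU μ x₁ t)
      = fun t => -μ / Real.sqrt ((x₁ + 1) ^ 2 + t ^ 2) - (1 - μ) / Real.sqrt ((x₁ - 1) ^ 2 + t ^ 2) := rfl
  rw [heq]
  exact h.deriv.trans (by ring)

lemma sq_pos' {u : ℝ} (h : u ≠ 0) : 0 < u ^ 2 :=
  lt_of_le_of_ne (sq_nonneg u) (Ne.symm (pow_ne_zero 2 h))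

lemma sumsq_pos {u v : ℝ} (h : u ≠ 0 ∨ v ≠ 0) : 0 < u ^ 2 + v ^ 2 := by
  rcases h with h | h
  · have := lt_of_le_of_ne (sq_nonneg u) (Ne.symm (pow_ne_zero 2 h))
    nlinarith [sq_nonneg v]
  · have := lt_of_le_of_ne (sq_nonneg v) (Ne.symm (pow_ne_zero 2 h))
    nlinarith [sq_nonneg u]


set_option maxHeartbeats 1000000 in
theorem eulerTwoCenters_critical_point (μ : ℝ) (h0 : 0 < μ) (h1 : μ < 1) :
    {p : ℝ × ℝ | p ≠ (-1, 0) ∧ p ≠ (1, 0) ∧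
        deriv (fun t => eulerU μ t p.2) p.1 = 0 ∧ deriv (fun t => eulerU μ p.1 t) p.2 = 0}
      = {((2 * μ - 1) / (1 + 2 * Real.sqrt (μ - μ ^ 2)), 0)} ∧
    -1 < (2 * μ - 1) / (1 + 2 * Real.sqrt (μ - μ ^ 2)) ∧
    (2 * μ - 1) / (1 + 2 * Real.sqrt (μ - μ ^ 2)) < 1 ∧
    eulerU μ ((2 * μ - 1) / (1 + 2 * Real.sqrt (μ - μ ^ 2))) 0
      = -(1 / 2) - Real.sqrt (μ - μ ^ 2) := by
  set a := Real.sqrt μ with ha_def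
  set b := Real.sqrt (1 - μ) with hb_def
  have ha2 : a ^ 2 = μ := Real.sq_sqrt h0.le
  have hb2 : b ^ 2 = 1 - μ := Real.sq_sqrt (by linarith)
  have hap : 0 < a := Real.sqrt_pos.2 h0
  have hbp : 0 < b := Real.sqrt_pos.2 (by linarith)
  have habp : 0 < a + b := by linarith
  have hab : Real.sqrt (μ - μ ^ 2) = a * b := by
    rw [show μ - μ ^ 2 = μ * (1 - μ) by ring, Real.sqrt_mul h0.le]
  set X := (2 * μ - 1) / (1 + 2 * Real.sqrt (μ - μ ^ 2)) with hX_def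
  have hXa : X = (a - b) / (a + b) := by
    rw [hX_def, hab, div_eq_div_iff (by positivity) habp.ne']
    linear_combination (-(2 * b)) * ha2 + (2 * a) * hb2
  have hXm : -1 < X := by
    rw [hXa, lt_div_iff₀ habp]; linarith
  have hXp : X < 1 := by
    rw [hXa, div_lt_iff₀ habp]; linarith
  have hu : X + 1 = 2 * a / (a + b) := by
    rw [hXa]; field_simp; ring
  have hv : 1 - X = 2 * b / (a + b) := by
    rw [hXa]; field_simp; ring
  have hu0 : (0:ℝ) < X + 1 := by linarith
  have hv0 : (0:ℝ) < 1 - X := by linarith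
  refine ⟨?_, hXm, hXp, ?_⟩
  · ext ⟨x₁, x₂⟩
    simp only [Set.mem_setOf_eq, Set.mem_singleton_iff, Prod.mk.injEq, ne_eq, Prod.ext_iff]
    constructor
    · rintro ⟨hne1, hne2, hd1, hd2⟩
      have hne1' : x₁ ≠ -1 ∨ x₂ ≠ 0 := by
        by_contra hc; push_neg at hc; exact hne1 ⟨hc.1, hc.2⟩
      have hne2' : x₁ ≠ 1 ∨ x₂ ≠ 0 := by
        by_contra hc; push_neg at hc; exact hne2 ⟨hc.1, hc.2⟩
      have hs1 : 0 < (x₁ + 1) ^ 2 + x₂ ^ 2 := by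
        apply sumsq_pos
        rcases hne1' with h | h
        · exact Or.inl (fun hh => h (by linarith))
        · exact Or.inr h
      have hs2 : 0 < (x₁ - 1) ^ 2 + x₂ ^ 2 := by
        apply sumsq_pos
        rcases hne2' with h | h
        · exact Or.inl (fun hh => h (by linarith))
        · exact Or.inr h
      rw [euler_deriv2 μ x₁ x₂ hs1 hs2] at hd2
      have hA : 0 < Real.sqrt ((x₁ + 1) ^ 2 + x₂ ^ 2) ^ 3 := pow_pos (Real.sqrt_pos.2 hs1) 3
      have hB : 0 < Real.sqrt ((x₁ - 1) ^ 2 + x₂ ^ 2) ^ 3 := pow_pos (Real.sqrt_pos.2 hs2) 3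
      have hx2 : x₂ = 0 := by
        rcases lt_trichotomy x₂ 0 with h | h | h
        · exfalso
          have t1 := div_neg_of_neg_of_pos (mul_neg_of_pos_of_neg h0 h) hA
          have t2 := div_neg_of_neg_of_pos (mul_neg_of_pos_of_neg (by linarith : (0:ℝ) < 1 - μ) h) hB
          linarith
        · exact h
        · exfalso
          have t1 := div_pos (mul_pos h0 h) hA
          have t2 := div_pos (mul_pos (by linarith : (0:ℝ) < 1 - μ) h) hB
          linarith
      subst hx2
      refine ⟨?_, rfl⟩
      have hx1m : x₁ ≠ -1 := by rcases hne1' with h | h; exact h; exact absurd rfl h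
      have hx1p : x₁ ≠ 1 := by rcases hne2' with h | h; exact h; exact absurd rfl h
      have hu0' : x₁ + 1 ≠ 0 := fun hh => hx1m (by linarith)
      have hv0' : x₁ - 1 ≠ 0 := fun hh => hx1p (by linarith)
      rw [euler_deriv1 μ x₁ 0 hs1 hs2] at hd1
      rw [show ((0:ℝ)) ^ 2 = 0 by norm_num, add_zero, add_zero,
        Real.sqrt_sq_eq_abs, Real.sqrt_sq_eq_abs] at hd1
      rcases hu0'.lt_or_gt with hu' | hu'
      · exfalso
        rw [abs_of_neg hu', abs_of_neg (by linarith : x₁ - 1 < 0)] at hd1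
        have t1 := div_neg_of_neg_of_pos (mul_neg_of_pos_of_neg h0 hu')
          (pow_pos (by linarith : (0:ℝ) < -(x₁ + 1)) 3)
        have t2 := div_neg_of_neg_of_pos
          (mul_neg_of_pos_of_neg (by linarith : (0:ℝ) < 1 - μ) (by linarith : x₁ - 1 < 0))
          (pow_pos (by linarith : (0:ℝ) < -(x₁ - 1)) 3)
        linarith
      · rcases hv0'.lt_or_gt with hv' | hv'
        · -- main case: -1 < x₁ < 1
          rw [abs_of_pos hu', abs_of_neg hv'] at hd1
          have key : μ * (1 - x₁) ^ 2 = (1 - μ) * (x₁ + 1) ^ 2 := by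
            have h2 : (0:ℝ) < 1 - x₁ := by linarith
            field_simp at hd1
            have hpos : (x₁ + 1) * (1 - x₁) ≠ 0 := ne_of_gt (mul_pos hu' h2)
            have hmul : (x₁ + 1) * (1 - x₁) * (μ * (1 - x₁) ^ 2)
                = (x₁ + 1) * (1 - x₁) * ((1 - μ) * (x₁ + 1) ^ 2) := by linear_combination ((x₁ + 1) * (1 - x₁)) * hd1
            exact mul_left_cancel₀ hpos hmul
          have h5 : (a * (1 - x₁)) ^ 2 = (b * (1 + x₁)) ^ 2 := by
            rw [mul_pow, mul_pow, ha2, hb2]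
            linear_combination key
          have h6 : a * (1 - x₁) = b * (1 + x₁) := by
            nlinarith [mul_pos hap (by linarith : (0:ℝ) < 1 - x₁),
              mul_pos hbp (by linarith : (0:ℝ) < 1 + x₁)]
          rw [hXa, eq_div_iff habp.ne']
          linear_combination -h6
        · exfalso
          rw [abs_of_pos hu', abs_of_pos hv'] at hd1
          have t1 := div_pos (mul_pos h0 hu') (pow_pos hu' 3)
          have t2 := div_pos (mul_pos (by linarith : (0:ℝ) < 1 - μ) hv') (pow_pos hv' 3)
          linarith
    · rintro ⟨hx1, hx2⟩
      subst hx1; subst hx2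
      have hs1 : 0 < (X + 1) ^ 2 + (0:ℝ) ^ 2 := by
        rw [show ((0:ℝ)) ^ 2 = 0 by norm_num, add_zero]; exact pow_pos hu0 2
      have hs2 : 0 < (X - 1) ^ 2 + (0:ℝ) ^ 2 := by
        rw [show ((0:ℝ)) ^ 2 = 0 by norm_num, add_zero]
        exact sq_pos' (by intro hh; rw [sub_eq_zero] at hh; exact absurd hh (by intro h'; rw [h'] at hXp; linarith))
      refine ⟨fun hc => by linarith [hc.1], fun hc => by linarith [hc.1], ?_, ?_⟩
      · rw [euler_deriv1 μ X 0 hs1 hs2,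
          show ((0:ℝ)) ^ 2 = 0 by norm_num, add_zero, add_zero,
          Real.sqrt_sq hu0.le, show (X - 1) ^ 2 = (1 - X) ^ 2 by ring,
          Real.sqrt_sq hv0.le]
        have key2 : μ * (1 - X) ^ 2 = (1 - μ) * (X + 1) ^ 2 := by
          rw [hu, hv, ← hb2, ← ha2]
          field_simp
        field_simp
        linear_combination (1 - X) * key2
      · rw [euler_deriv2 μ X 0 hs1 hs2]
        simp
  · -- critical value
    have e1 : eulerU μ X 0
        = -μ / (X + 1) - (1 - μ) / (1 - X) := by
      rw [eulerU, show ((0:ℝ)) ^ 2 = 0 by norm_num, add_zero, add_zero,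
        Real.sqrt_sq hu0.le, show (X - 1) ^ 2 = (1 - X) ^ 2 by ring,
        Real.sqrt_sq hv0.le]
    rw [e1, hab, hu, hv, ← hb2, ← ha2]
    field_simp
    ring_nf
    have habs : a ^ 2 + b ^ 2 = 1 := by rw [ha2, hb2]; ring
    linear_combination (-1 : ℝ) * habs
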